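/- For every complex number q with |q| < 1, the generating function identity Σ_{n≥0} DE2(n) q^n = Σ_{n≥0} (−q^2; q^2)_n q^{4n+2} / (q; q^2)_{n+1} holds (the constant term DE2(0) being 0). -/

import Mathlib

open Finset

/-- `DE1 n` is the number of partitions of `n` in which no even part is repeated
and the largest part is odd. -/
noncomputable def DE1 (n : ℕ) : ℕ :=
  Nat.card {p : n.Partition //
    (∀ k ∈ p.parts, Even k → p.parts.count k = 1) ∧
    ∃ k ∈ p.parts, Odd k ∧ ∀ j ∈ p.parts, j ≤ k}

/-- `DE2 n` is the number of partitions of `n` in which no even part is repeated,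
the largest part is odd and appears at least twice. -/
noncomputable def DE2 (n : ℕ) : ℕ :=
  Nat.card {p : n.Partition //
    (∀ k ∈ p.parts, Even k → p.parts.count k = 1) ∧
    ∃ k ∈ p.parts, Odd k ∧ 2 ≤ p.parts.count k ∧ ∀ j ∈ p.parts, j ≤ k}

/-- `DE3 n` is the number of partitions of `n` in which no even part is repeated,
the largest part is odd and appears exactly once. -/
noncomputable def DE3 (n : ℕ) : ℕ :=
  Nat.card {p : n.Partition //
    (∀ k ∈ p.parts, Even k → p.parts.count k = 1) ∧
    ∃ k ∈ p.parts, Odd k ∧ p.parts.count k = 1 ∧ ∀ j ∈ p.parts, j ≤ k}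

/-- The finite q-Pochhammer symbol `(a; q)_n = ∏_{j=0}^{n-1} (1 - a q^j)`. -/
noncomputable def qPoch (a q : ℂ) (n : ℕ) : ℂ := ∏ j ∈ Finset.range n, (1 - a * q ^ j)


namespace Stmt11

abbrev Idx (m : ℕ) := (Fin (m+1) → ℕ) × (Fin m → Fin 2)

def wt (m : ℕ) (y : Idx m) : ℕ :=
  (4*m+2) + ∑ i : Fin (m+1), (2*(i:ℕ)+1) * y.1 i + ∑ i : Fin m, (2*(i:ℕ)+2) * (y.2 i : ℕ)

def fullParts (m : ℕ) (y : Idx m) : Multiset ℕ :=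
  Multiset.replicate 2 (2*m+1) + ∑ i : Fin (m+1), Multiset.replicate (y.1 i) (2*(i:ℕ)+1)
    + ∑ i : Fin m, Multiset.replicate ((y.2 i : ℕ)) (2*(i:ℕ)+2)

lemma count_fullParts (m : ℕ) (y : Idx m) (k : ℕ) :
    (fullParts m y).count k =
      (if 2*m+1 = k then 2 else 0)
      + (∑ i : Fin (m+1), if 2*(i:ℕ)+1 = k then y.1 i else 0)
      + (∑ i : Fin m, if 2*(i:ℕ)+2 = k then (y.2 i : ℕ) else 0) := by
  simp only [fullParts, Multiset.count_add, Multiset.count_sum', Multiset.count_replicate]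

lemma sum_if_eq {M : Type*} [AddCommMonoid M] {n : ℕ} (j : Fin n) (g : Fin n → M)
    (P : Fin n → Prop) [DecidablePred P] (hP : ∀ i, P i ↔ i = j) :
    ∑ i : Fin n, (if P i then g i else 0) = g j := by
  rw [Finset.sum_congr rfl (fun i _ => if_congr (hP i) rfl rfl)]
  simp

lemma sum_if_zero {M : Type*} [AddCommMonoid M] {n : ℕ} (g : Fin n → M)
    (P : Fin n → Prop) [DecidablePred P] (hP : ∀ i, ¬ P i) :
    ∑ i : Fin n, (if P i then g i else 0) = 0 := by
  exact Finset.sum_eq_zero (fun i _ => if_neg (hP i))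

lemma count_odd (m : ℕ) (y : Idx m) (j : Fin (m+1)) :
    (fullParts m y).count (2*(j:ℕ)+1) = (if (j:ℕ) = m then 2 else 0) + y.1 j := by
  rw [count_fullParts,
    sum_if_eq j _ _ (fun i => by rw [Fin.ext_iff]; omega),
    sum_if_zero _ _ (fun i => by omega)]
  by_cases hj : (j:ℕ) = m
  · rw [if_pos (by omega), if_pos hj, add_zero]
  · rw [if_neg (by omega), if_neg hj, add_zero]

lemma count_even (m : ℕ) (y : Idx m) (j : Fin m) :
    (fullParts m y).count (2*(j:ℕ)+2) = (y.2 j : ℕ) := by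
  rw [count_fullParts,
    sum_if_eq j _ _ (fun i => by rw [Fin.ext_iff]; omega),
    sum_if_zero _ _ (fun i => by omega),
    if_neg (by omega)]
  simp

lemma count_zero (m : ℕ) (y : Idx m) (k : ℕ)
    (h1 : 2*m+1 ≠ k) (h2 : ∀ i : Fin (m+1), 2*(i:ℕ)+1 ≠ k) (h3 : ∀ i : Fin m, 2*(i:ℕ)+2 ≠ k) :
    (fullParts m y).count k = 0 := by
  rw [count_fullParts, if_neg h1, sum_if_zero _ _ h2, sum_if_zero _ _ h3]
  simp

lemma mem_le (m : ℕ) (y : Idx m) : ∀ j ∈ fullParts m y, j ≤ 2*m+1 := by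
  intro j hj
  by_contra h
  push_neg at h
  have := count_zero m y j (by omega) (fun i => by have := i.isLt; omega)
    (fun i => by have := i.isLt; omega)
  rw [Multiset.count_eq_zero] at this
  exact this hj

lemma mem_pos (m : ℕ) (y : Idx m) : ∀ j ∈ fullParts m y, 0 < j := by
  intro j hj
  rcases Nat.eq_zero_or_pos j with h | h
  · subst h
    have := count_zero m y 0 (by omega) (fun i => by omega) (fun i => by omega)
    rw [Multiset.count_eq_zero] at this
    exact absurd hj this
  · exact h

lemma sum_fullParts (m : ℕ) (y : Idx m) : (fullParts m y).sum = wt m y := by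
  have hms : ∀ {n : ℕ} (f : Fin n → Multiset ℕ), (∑ i : Fin n, f i).sum = ∑ i : Fin n, (f i).sum := by
    intro n f
    rw [show (Multiset.sum : Multiset ℕ → ℕ) = Multiset.sumAddMonoidHom from rfl, map_sum]
  rw [fullParts, Multiset.sum_add, Multiset.sum_add, hms, hms]
  simp only [Multiset.sum_replicate, smul_eq_mul, wt]
  have h1 : ∀ i : Fin (m+1), y.1 i * (2*(i:ℕ)+1) = (2*(i:ℕ)+1) * y.1 i := fun i => mul_comm _ _
  have h2 : ∀ i : Fin m, (y.2 i : ℕ) * (2*(i:ℕ)+2) = (2*(i:ℕ)+2) * (y.2 i : ℕ) := fun i => mul_comm _ _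
  rw [Finset.sum_congr rfl (fun i _ => h1 i), Finset.sum_congr rfl (fun i _ => h2 i)]
  omega


def S (n : ℕ) := {p : n.Partition //
    (∀ k ∈ p.parts, Even k → p.parts.count k = 1) ∧
    ∃ k ∈ p.parts, Odd k ∧ 2 ≤ p.parts.count k ∧ ∀ j ∈ p.parts, j ≤ k}

lemma top_mem (m : ℕ) (y : Idx m) : 2*m+1 ∈ fullParts m y := by
  rw [← Multiset.count_pos]
  have := count_odd m y (Fin.last m)
  rw [Fin.val_last] at this
  rw [this, if_pos rfl]
  omega

lemma even_count (m : ℕ) (y : Idx m) :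
    ∀ k ∈ fullParts m y, Even k → (fullParts m y).count k = 1 := by
  intro k hk hke
  have hk2 : 2 ∣ k := hke.two_dvd
  have hkle : k ≤ 2*m+1 := mem_le m y k hk
  have hkpos : 0 < k := mem_pos m y k hk
  obtain ⟨j, hj⟩ := hk2
  have hj1 : 1 ≤ j := by omega
  have hjm : j ≤ m := by omega
  set j' : Fin m := ⟨j - 1, by omega⟩ with hj'
  have hkeq : k = 2*(j' : ℕ)+2 := by simp [hj']; omega
  have hcnt := count_even m y j'
  rw [← hkeq] at hcnt
  have hge : 1 ≤ (fullParts m y).count k := Multiset.one_le_count_iff_mem.mpr hk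
  have hle : (y.2 j' : ℕ) ≤ 1 := Fin.is_le (y.2 j')
  omega

def Φ (z : Σ m : ℕ, Idx m) : Σ n : ℕ, S n :=
  ⟨wt z.1 z.2,
    ⟨⟨fullParts z.1 z.2, fun {i} hi => mem_pos z.1 z.2 i hi, sum_fullParts z.1 z.2⟩,
      even_count z.1 z.2,
      2*z.1+1, top_mem z.1 z.2, ⟨z.1, by omega⟩, by
        have := count_odd z.1 z.2 (Fin.last z.1)
        rw [Fin.val_last, if_pos rfl] at this
        show 2 ≤ Multiset.count (2*z.1+1) (fullParts z.1 z.2)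
        rw [this]; omega,
      mem_le z.1 z.2⟩⟩

lemma Φ_inj : Function.Injective Φ := by
  rintro ⟨m, y⟩ ⟨m', y'⟩ h
  have hparts : fullParts m y = fullParts m' y' :=
    congrArg (fun w : Σ n : ℕ, S n => w.2.1.parts) h
  have hm : m = m' := by
    have h1 : 2*m+1 ≤ 2*m'+1 := by
      have := mem_le m' y' (2*m+1) (hparts ▸ top_mem m y)
      omega
    have h2 : 2*m'+1 ≤ 2*m+1 := by
      have := mem_le m y (2*m'+1) (hparts.symm ▸ top_mem m' y')
      omega
    omega
  subst hm
  have hy : y = y' := by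
    apply Prod.ext
    · funext j
      have h1 := count_odd m y j
      have h2 := count_odd m y' j
      rw [hparts, h2] at h1
      omega
    · funext j
      have h1 := count_even m y j
      have h2 := count_even m y' j
      rw [hparts, h2] at h1
      exact Fin.val_injective h1.symm
  rw [hy]

lemma Φ_surj : Function.Surjective Φ := by
  rintro ⟨n, p, hp⟩
  obtain ⟨heven, k, hkmem, hkodd, hk2, hkmax⟩ := hp
  obtain ⟨m, hm⟩ : ∃ m, k = 2*m+1 := by
    rcases hkodd with ⟨m, hm'⟩; exact ⟨m, by omega⟩
  subst hm
  set a : Fin (m+1) → ℕ := fun i =>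
    if (i:ℕ) = m then p.parts.count (2*m+1) - 2 else p.parts.count (2*(i:ℕ)+1) with ha
  set b : Fin m → Fin 2 := fun i => if 2*(i:ℕ)+2 ∈ p.parts then 1 else 0 with hb
  have hbv : ∀ i : Fin m, ((b i : ℕ)) = if 2*(i:ℕ)+2 ∈ p.parts then 1 else 0 := by
    intro i; rw [hb]; split <;> simp_all
  have hparts : fullParts m (a, b) = p.parts := by
    ext k'
    rcases Nat.even_or_odd k' with hke | hko
    · -- k' even
      obtain ⟨j, hj⟩ := hke.two_dvd
      rcases Nat.eq_zero_or_pos j with hj0 | hjpos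
      · have : k' = 0 := by omega
        subst this
        rw [count_zero m (a,b) 0 (by omega) (fun i => by omega) (fun i => by omega)]
        symm
        rw [Multiset.count_eq_zero]
        intro hmem
        exact absurd (p.parts_pos hmem) (by omega)
      · rcases le_or_gt j m with hjm | hjm
        · set j' : Fin m := ⟨j - 1, by omega⟩ with hj'
          have hkeq : k' = 2*(j' : ℕ)+2 := by simp [hj']; omega
          rw [hkeq, count_even m (a,b) j']
          show (b j' : ℕ) = _
          rw [hbv j', ← hkeq]
          by_cases hmem : k' ∈ p.parts
          · rw [if_pos hmem, heven k' hmem (by exact ⟨j, by omega⟩)]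
          · rw [if_neg hmem, eq_comm, Multiset.count_eq_zero]
            exact hmem
        · -- j > m : k' = 2j ≥ 2m+2 > 2m+1
          rw [count_zero m (a,b) k' (by omega) (fun i => by have := i.isLt; omega)
            (fun i => by have := i.isLt; omega)]
          symm; rw [Multiset.count_eq_zero]
          intro hmem
          have := hkmax k' hmem
          omega
    · -- k' odd
      obtain ⟨j, hj⟩ := hko
      rcases le_or_gt j m with hjm | hjm
      · set j' : Fin (m+1) := ⟨j, by omega⟩ with hj'
        have hkeq : k' = 2*(j' : ℕ)+1 := by simp [hj']; omega
        rw [hkeq, count_odd m (a,b) j']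
        show _ + a j' = _
        rw [ha]
        simp only [hj']
        by_cases hjm' : j = m
        · rw [if_pos hjm', if_pos hjm']
          have : 2*(j':ℕ)+1 = 2*m+1 := by simp [hj']; omega
          rw [← hkeq]
          have : k' = 2*m+1 := by omega
          rw [this]
          omega
        · rw [if_neg hjm', if_neg hjm']
          congr 1
          omega
      · rw [count_zero m (a,b) k' (by omega) (fun i => by have := i.isLt; omega)
          (fun i => by have := i.isLt; omega)]
        symm; rw [Multiset.count_eq_zero]
        intro hmem
        have := hkmax k' hmem
        omega
  have hn : wt m (a, b) = n := by
    rw [← sum_fullParts m (a,b), hparts, p.parts_sum]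
  refine ⟨⟨m, (a, b)⟩, ?_⟩
  clear_value a b
  subst hn
  show (⟨wt m (a,b), _⟩ : Σ n : ℕ, S n) = ⟨wt m (a,b), _⟩
  exact congrArg (fun pp : S (wt m (a,b)) => (⟨wt m (a,b), pp⟩ : Σ n : ℕ, S n))
    (Subtype.ext (Nat.Partition.ext hparts))

section Analysis

variable {K : Type*} [NormedField K] [CompleteSpace K]

lemma pi_tsum {ι : Type*} : ∀ (k : ℕ) (f : Fin k → ι → K), (∀ i, Summable fun n => ‖f i n‖) →
    Summable (fun a : Fin k → ι => ‖∏ i, f i (a i)‖) ∧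
      ∑' a : Fin k → ι, ∏ i, f i (a i) = ∏ i, ∑' n, f i n := by
  intro k
  induction k with
  | zero =>
    intro f _
    have h1 : ∀ a : Fin 0 → ι, (∏ i, f i (a i)) = 1 := fun a => by simp
    constructor
    · exact Summable.of_finite
    · rw [tsum_congr h1, tsum_eq_single default (fun b hb => absurd (Subsingleton.elim b default) hb)]
      simp
  | succ k ih =>
    intro f hf
    obtain ⟨ihS, ihV⟩ := ih (fun i => f i.succ) (fun i => hf i.succ)
    have hgn : Summable fun p : ι × (Fin k → ι) => ‖f 0 p.1 * ∏ i : Fin k, f i.succ (p.2 i)‖ :=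
      (Summable.mul_of_nonneg (hf 0) ihS (fun _ => norm_nonneg _) (fun _ => norm_nonneg _)).congr
        (fun p => (norm_mul _ _).symm)
    have hcomp : ∀ a : Fin (k+1) → ι,
        (∏ i, f i (a i)) = f 0 (a 0) * ∏ i : Fin k, f i.succ (a i.succ) :=
      fun a => Fin.prod_univ_succ _
    have he1 : ∀ a : Fin (k+1) → ι, ((Fin.consEquiv (fun _ : Fin (k+1) => ι)).symm a).1 = a 0 := fun a => rfl
    have he2 : ∀ (a : Fin (k+1) → ι) (i : Fin k), ((Fin.consEquiv (fun _ : Fin (k+1) => ι)).symm a).2 i = a i.succ :=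
      fun a i => rfl
    have hkey : ∀ a : Fin (k+1) → ι,
        (fun p : ι × (Fin k → ι) => f 0 p.1 * ∏ i : Fin k, f i.succ (p.2 i))
          ((Fin.consEquiv (fun _ : Fin (k+1) => ι)).symm a) = ∏ i, f i (a i) := by
      intro a
      simp only [he1, he2]
      exact (hcomp a).symm
    constructor
    · have := ((Fin.consEquiv (fun _ : Fin (k+1) => ι)).symm.summable_iff
        (f := fun p : ι × (Fin k → ι) => ‖f 0 p.1 * ∏ i : Fin k, f i.succ (p.2 i)‖)).mpr hgn
      exact this.congr (fun a => congrArg norm (hkey a))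
    · calc ∑' a : Fin (k+1) → ι, ∏ i, f i (a i)
          = ∑' a : Fin (k+1) → ι, (fun p : ι × (Fin k → ι) =>
              f 0 p.1 * ∏ i : Fin k, f i.succ (p.2 i)) ((Fin.consEquiv (fun _ : Fin (k+1) => ι)).symm a) :=
            tsum_congr (fun a => (hkey a).symm)
        _ = ∑' p : ι × (Fin k → ι), f 0 p.1 * ∏ i : Fin k, f i.succ (p.2 i) :=
            by
              have h := Equiv.tsum_eq (Fin.consEquiv (fun _ : Fin (k+1) => ι)).symm
                (fun p : ι × (Fin k → ι) => f 0 p.1 * ∏ i : Fin k, f i.succ (p.2 i))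
              simpa using h
        _ = (∑' n, f 0 n) * ∑' a : Fin k → ι, ∏ i, f i.succ (a i) :=
            (tsum_mul_tsum_of_summable_norm (hf 0) ihS).symm
        _ = ∏ i, ∑' n, f i n := by rw [ihV, ← Fin.prod_univ_succ (fun i => ∑' n, f i n)]

lemma fiber_eval (x : K) (hx : ‖x‖ < 1) (m : ℕ) :
    Summable (fun y : Idx m => ‖x ^ wt m y‖) ∧
    ∑' y : Idx m, x ^ wt m y =
      x^(4*m+2) * (∏ i : Fin (m+1), (1 - x^(2*(i:ℕ)+1))⁻¹) * ∏ i : Fin m, (1 + x^(2*(i:ℕ)+2)) := by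
  have hxlt : ∀ c : ℕ, c ≠ 0 → ‖x ^ c‖ < 1 := by
    intro c hc
    rw [norm_pow]
    exact pow_lt_one₀ (norm_nonneg x) hx hc
  obtain ⟨h1S, h1V⟩ := pi_tsum (m+1) (fun i (n : ℕ) => (x^(2*(i:ℕ)+1))^n)
    (fun i => by
      simp only [norm_pow]
      exact summable_geometric_of_lt_one (by positivity) (by rw [← norm_pow]; exact hxlt _ (by omega)))
  obtain ⟨h2S, h2V⟩ := pi_tsum m (fun i (c : Fin 2) => (x^(2*(i:ℕ)+2))^(c:ℕ))
    (fun i => Summable.of_finite)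
  have hdec : ∀ y : Idx m, x ^ wt m y =
      x^(4*m+2) * ((∏ i : Fin (m+1), (x^(2*(i:ℕ)+1))^(y.1 i)) * ∏ i : Fin m, (x^(2*(i:ℕ)+2))^((y.2 i : ℕ))) := by
    intro y
    rw [wt, pow_add, pow_add, ← Finset.prod_pow_eq_pow_sum, ← Finset.prod_pow_eq_pow_sum, mul_assoc]
    congr 1
    congr 1 <;> apply Finset.prod_congr rfl <;> intro i _ <;> rw [pow_mul]
  have hprodS : Summable (fun y : Idx m =>
      ‖(∏ i : Fin (m+1), (x^(2*(i:ℕ)+1))^(y.1 i)) * ∏ i : Fin m, (x^(2*(i:ℕ)+2))^((y.2 i : ℕ))‖) :=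
    (Summable.mul_of_nonneg h1S h2S (fun _ => norm_nonneg _) (fun _ => norm_nonneg _)).congr
      (fun y => (norm_mul _ _).symm)
  constructor
  · have : (fun y : Idx m => ‖x ^ wt m y‖) = fun y : Idx m =>
        ‖x^(4*m+2)‖ * ‖(∏ i : Fin (m+1), (x^(2*(i:ℕ)+1))^(y.1 i)) * ∏ i : Fin m, (x^(2*(i:ℕ)+2))^((y.2 i : ℕ))‖ :=
      funext fun y => by rw [hdec y, norm_mul]
    rw [this]
    exact hprodS.mul_left _
  · calc ∑' y : Idx m, x ^ wt m y
        = x^(4*m+2) * ∑' y : Idx m,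
            (∏ i : Fin (m+1), (x^(2*(i:ℕ)+1))^(y.1 i)) * ∏ i : Fin m, (x^(2*(i:ℕ)+2))^((y.2 i : ℕ)) := by
          rw [← tsum_mul_left]
          exact tsum_congr hdec
      _ = x^(4*m+2) * ((∑' a : Fin (m+1) → ℕ, ∏ i : Fin (m+1), (x^(2*(i:ℕ)+1))^(a i)) *
            ∑' b : Fin m → Fin 2, ∏ i : Fin m, (x^(2*(i:ℕ)+2))^((b i : ℕ))) := by
          rw [← tsum_mul_tsum_of_summable_norm h1S h2S]
      _ = x^(4*m+2) * (∏ i : Fin (m+1), (1 - x^(2*(i:ℕ)+1))⁻¹) * ∏ i : Fin m, (1 + x^(2*(i:ℕ)+2)) := by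
          rw [h1V, h2V, mul_assoc]
          congr 2
          · exact Finset.prod_congr rfl fun i _ =>
              tsum_geometric_of_norm_lt_one (hxlt _ (by omega))
          · refine Finset.prod_congr rfl fun i _ => ?_
            rw [tsum_fintype, Fin.sum_univ_two]
            simp

lemma inv_one_sub_le_exp {r t : ℝ} (h0 : 0 ≤ t) (htr : t ≤ r) (h1 : r < 1) :
    (1 - t)⁻¹ ≤ Real.exp (t * (1-r)⁻¹) := by
  have h1t : 0 < 1 - t := by linarith
  have h1r : 0 < 1 - r := by linarith
  have hinv : (1-r)⁻¹ * (1-r) = 1 := inv_mul_cancel₀ (ne_of_gt h1r)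
  have hinvpos : 0 < (1-r)⁻¹ := inv_pos.mpr h1r
  have key : (1 - t)⁻¹ ≤ 1 + t * (1-r)⁻¹ := by
    rw [inv_eq_one_div, div_le_iff₀ h1t]
    nlinarith [mul_nonneg (mul_nonneg h0 hinvpos.le) (sub_nonneg.mpr htr)]
  exact key.trans (by have := Real.add_one_le_exp (t * (1-r)⁻¹); linarith)

lemma sum_pow_le {r : ℝ} (h0 : 0 ≤ r) (h1 : r < 1) (N : ℕ) (e : Fin N → ℕ)
    (he : ∀ i : Fin N, (i:ℕ) ≤ e i) :
    ∑ i : Fin N, r ^ (e i) ≤ (1-r)⁻¹ := by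
  calc ∑ i : Fin N, r ^ e i ≤ ∑ i : Fin N, r ^ (i:ℕ) :=
        Finset.sum_le_sum (fun i _ => pow_le_pow_of_le_one h0 h1.le (he i))
    _ = ∑ i ∈ Finset.range N, r ^ i := Fin.sum_univ_eq_sum_range _ N
    _ ≤ ∑' i : ℕ, r ^ i := Summable.sum_le_tsum _ (fun i _ => pow_nonneg h0 i)
        (summable_geometric_of_lt_one h0 h1)
    _ = (1-r)⁻¹ := tsum_geometric_of_lt_one h0 h1

lemma fiber_bound (r : ℝ) (h0 : 0 ≤ r) (h1 : r < 1) (m : ℕ) :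
    r^(4*m+2) * (∏ i : Fin (m+1), (1 - r^(2*(i:ℕ)+1))⁻¹) * ∏ i : Fin m, (1 + r^(2*(i:ℕ)+2))
      ≤ (r^4)^m * (Real.exp ((1-r)⁻¹ * (1-r)⁻¹) * Real.exp ((1-r)⁻¹)) := by
  have hple : ∀ c : ℕ, 1 ≤ c → r ^ c ≤ r := by
    intro c hc
    calc r ^ c ≤ r ^ 1 := pow_le_pow_of_le_one h0 h1.le hc
      _ = r := pow_one r
  have hP1 : (∏ i : Fin (m+1), (1 - r^(2*(i:ℕ)+1))⁻¹) ≤ Real.exp ((1-r)⁻¹ * (1-r)⁻¹) := by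
    calc (∏ i : Fin (m+1), (1 - r^(2*(i:ℕ)+1))⁻¹)
        ≤ ∏ i : Fin (m+1), Real.exp (r^(2*(i:ℕ)+1) * (1-r)⁻¹) := by
          apply Finset.prod_le_prod
          · intro i _
            have : r^(2*(i:ℕ)+1) ≤ r := hple _ (by omega)
            have : 0 < 1 - r^(2*(i:ℕ)+1) := by linarith
            positivity
          · intro i _
            exact inv_one_sub_le_exp (pow_nonneg h0 _) (hple _ (by omega)) h1
      _ = Real.exp (∑ i : Fin (m+1), r^(2*(i:ℕ)+1) * (1-r)⁻¹) := (Real.exp_sum _ _).symm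
      _ ≤ Real.exp ((1-r)⁻¹ * (1-r)⁻¹) := by
          rw [Real.exp_le_exp, ← Finset.sum_mul]
          apply mul_le_mul_of_nonneg_right _ (inv_nonneg.mpr (by linarith))
          exact sum_pow_le h0 h1 (m+1) _ (fun i => by omega)
  have hP2 : (∏ i : Fin m, (1 + r^(2*(i:ℕ)+2))) ≤ Real.exp ((1-r)⁻¹) := by
    calc (∏ i : Fin m, (1 + r^(2*(i:ℕ)+2)))
        ≤ ∏ i : Fin m, Real.exp (r^(2*(i:ℕ)+2)) := by
          apply Finset.prod_le_prod
          · intro i _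
            have := pow_nonneg h0 (2*(i:ℕ)+2)
            linarith
          · intro i _
            have := Real.add_one_le_exp (r^(2*(i:ℕ)+2))
            linarith
      _ = Real.exp (∑ i : Fin m, r^(2*(i:ℕ)+2)) := (Real.exp_sum _ _).symm
      _ ≤ Real.exp ((1-r)⁻¹) := by
          rw [Real.exp_le_exp]
          exact sum_pow_le h0 h1 m _ (fun i => by omega)
  have hpow : r^(4*m+2) ≤ (r^4)^m := by
    rw [← pow_mul]
    exact pow_le_pow_of_le_one h0 h1.le (by omega)
  have hnn1 : 0 ≤ ∏ i : Fin (m+1), (1 - r^(2*(i:ℕ)+1))⁻¹ := by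
    apply Finset.prod_nonneg
    intro i _
    have : r^(2*(i:ℕ)+1) ≤ r := hple _ (by omega)
    have : 0 < 1 - r^(2*(i:ℕ)+1) := by linarith
    positivity
  have hnn2 : 0 ≤ ∏ i : Fin m, (1 + r^(2*(i:ℕ)+2)) := by
    apply Finset.prod_nonneg
    intro i _
    have := pow_nonneg h0 (2*(i:ℕ)+2)
    linarith
  calc r^(4*m+2) * (∏ i : Fin (m+1), (1 - r^(2*(i:ℕ)+1))⁻¹) * ∏ i : Fin m, (1 + r^(2*(i:ℕ)+2))
      ≤ (r^4)^m * Real.exp ((1-r)⁻¹ * (1-r)⁻¹) * Real.exp ((1-r)⁻¹) := by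
        apply mul_le_mul _ hP2 hnn2 (by positivity)
        exact mul_le_mul hpow hP1 hnn1 (by positivity)
    _ = (r^4)^m * (Real.exp ((1-r)⁻¹ * (1-r)⁻¹) * Real.exp ((1-r)⁻¹)) := by ring

end Analysis

end Stmt11

theorem stmt_11 (q : ℂ) (hq : ‖q‖ < 1) :
    ∑' n : ℕ, (DE2 n : ℂ) * q ^ n =
      ∑' n : ℕ, qPoch (-q ^ 2) (q ^ 2) n * q ^ (4 * n + 2) / qPoch q (q ^ 2) (n + 1) := by
  classical
  have hq' : ‖q‖ < 1 := by exact hq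
  set r : ℝ := ‖q‖ with hrdef
  have hr0 : 0 ≤ r := norm_nonneg q
  have hr1 : r < 1 := hq'
  have hrn : ‖r‖ < 1 := by rw [Real.norm_eq_abs, abs_of_nonneg hr0]; exact hr1
  have hsum_r : Summable (fun z : Σ m : ℕ, Stmt11.Idx m => r ^ Stmt11.wt z.1 z.2) := by
    rw [summable_sigma_of_nonneg (fun z => pow_nonneg hr0 _)]
    constructor
    · intro m
      refine ((Stmt11.fiber_eval r hrn m).1).congr (fun y => ?_)
      rw [Real.norm_eq_abs, abs_of_nonneg (pow_nonneg hr0 _)]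
    · have hK : Summable (fun m : ℕ =>
          (r^4)^m * (Real.exp ((1-r)⁻¹ * (1-r)⁻¹) * Real.exp ((1-r)⁻¹))) :=
        (summable_geometric_of_lt_one (by positivity)
          (pow_lt_one₀ hr0 hr1 (by omega))).mul_right _
      apply Summable.of_nonneg_of_le (fun m => tsum_nonneg (fun y => pow_nonneg hr0 _)) _ hK
      intro m
      rw [(Stmt11.fiber_eval r hrn m).2]
      exact Stmt11.fiber_bound r hr0 hr1 m
  have hsum_c : Summable (fun z : Σ m : ℕ, Stmt11.Idx m => q ^ Stmt11.wt z.1 z.2) := by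
    apply Summable.of_norm
    refine hsum_r.congr (fun z => ?_)
    rw [norm_pow]
  let E : (Σ m : ℕ, Stmt11.Idx m) ≃ (Σ n : ℕ, Stmt11.S n) :=
    Equiv.ofBijective Stmt11.Φ ⟨Stmt11.Φ_inj, Stmt11.Φ_surj⟩
  have hsum_s : Summable (fun w : Σ n : ℕ, Stmt11.S n => (q : ℂ) ^ w.1) := by
    have hcomp : ((fun w : Σ n : ℕ, Stmt11.S n => (q : ℂ) ^ w.1) ∘ E) =
        fun z : Σ m : ℕ, Stmt11.Idx m => q ^ Stmt11.wt z.1 z.2 := rfl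
    exact (Equiv.summable_iff E).mp (by rw [hcomp]; exact hsum_c)
  have hfin : ∀ n : ℕ, (DE2 n : ℂ) * q ^ n = ∑' p : Stmt11.S n, (q : ℂ) ^ n := by
    intro n
    haveI : Finite (Stmt11.S n) := Subtype.finite
    haveI := Fintype.ofFinite (Stmt11.S n)
    rw [tsum_fintype, Finset.sum_const, Finset.card_univ, nsmul_eq_mul]
    congr 1
    have hcard : DE2 n = Fintype.card (Stmt11.S n) := by
      rw [show DE2 n = Nat.card (Stmt11.S n) from rfl, Nat.card_eq_fintype_card]
    rw [hcard]
  calc ∑' n : ℕ, (DE2 n : ℂ) * q ^ n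
      = ∑' n : ℕ, ∑' p : Stmt11.S n, (q : ℂ) ^ n := tsum_congr hfin
    _ = ∑' w : Σ n : ℕ, Stmt11.S n, (q : ℂ) ^ w.1 := by
        exact (Summable.tsum_sigma' (fun n => hsum_s.sigma_factor n) hsum_s).symm
    _ = ∑' z : Σ m : ℕ, Stmt11.Idx m, (q : ℂ) ^ Stmt11.wt z.1 z.2 := by
        exact (Equiv.tsum_eq E (fun w => (q : ℂ) ^ w.1)).symm
    _ = ∑' m : ℕ, ∑' y : Stmt11.Idx m, (q : ℂ) ^ Stmt11.wt m y := by
        exact Summable.tsum_sigma' (fun m => hsum_c.sigma_factor m) hsum_c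
    _ = ∑' n : ℕ, qPoch (-q ^ 2) (q ^ 2) n * q ^ (4 * n + 2) / qPoch q (q ^ 2) (n + 1) := by
        apply tsum_congr
        intro m
        rw [(Stmt11.fiber_eval q hq' m).2]
        have hA : qPoch q (q^2) (m+1) = ∏ i : Fin (m+1), (1 - q^(2*(i:ℕ)+1)) := by
          rw [qPoch, ← Fin.prod_univ_eq_prod_range (fun j => (1 - q * (q^2)^j)) (m+1)]
          exact Finset.prod_congr rfl (fun i _ => by ring)
        have hB : qPoch (-q^2) (q^2) m = ∏ i : Fin m, (1 + q^(2*(i:ℕ)+2)) := by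
          rw [qPoch, ← Fin.prod_univ_eq_prod_range (fun j => (1 - (-q^2) * (q^2)^j)) m]
          exact Finset.prod_congr rfl (fun i _ => by ring)
        rw [hA, hB, Finset.prod_inv_distrib, div_eq_mul_inv]
        ring
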